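/- Let A be an MV-chain and A* Chang's totally ordered abelian group on ℤ × A. Then u = (0,1) = (1,0) is a strong unit of A*: for every (m,a) ∈ A* there exists n ∈ ℕ with (m,a) ≤ n • u. -/

import Mathlib

/-- An MV-algebra. -/
class MVAlgebra (A : Type*) where
  oplus : A → A → A
  mvnot : A → A
  zero : A
  oplus_comm : ∀ a b, oplus a b = oplus b a
  oplus_assoc : ∀ a b c, oplus (oplus a b) c = oplus a (oplus b c)
  zero_oplus : ∀ a, oplus zero a = a
  mvnot_mvnot : ∀ a, mvnot (mvnot a) = a
  oplus_one : ∀ a, oplus a (mvnot zero) = mvnot zero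
  luk : ∀ a b, oplus (mvnot (oplus (mvnot a) b)) b = oplus (mvnot (oplus (mvnot b) a)) a

namespace MVAlgebra

variable {A : Type*} [MVAlgebra A]

/-- The top element `1 = ¬0`. -/
def one : A := mvnot zero

/-- `a ⊙ b = ¬(¬a ⊕ ¬b)`. -/
def odot (a b : A) : A := mvnot (oplus (mvnot a) (mvnot b))

/-- The natural MV-order: `a ≤ b` iff `¬a ⊕ b = 1`. -/
def mvle (a b : A) : Prop := oplus (mvnot a) b = one

end MVAlgebra

namespace Chang

open MVAlgebra

variable (A : Type*) [MVAlgebra A]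

/-- The carrier of Chang's group: pairs `(m, a)` with `a ≠ 1`
(the pair `(m, 1)` being identified with `(m+1, 0)`). -/
def S : Set (ℤ × A) := {p | p.2 ≠ one}

variable {A}
open Classical

/-- Normalization realizing the identification `(m, 1) = (m+1, 0)`. -/
noncomputable def norm (p : ℤ × A) : ℤ × A := if p.2 = one then (p.1 + 1, zero) else p

/-- Chang's addition: `(m,a) + (n,b) = (m+n, a ⊕ b)` if `a ⊕ b < 1`,
and `(m+n+1, a ⊙ b)` if `a ⊕ b = 1`. -/
noncomputable def add (p q : ℤ × A) : ℤ × A :=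
  if oplus p.2 q.2 = one then (p.1 + q.1 + 1, odot p.2 q.2)
  else (p.1 + q.1, oplus p.2 q.2)

/-- Chang's negation: `-(m,a) = (-m-1, ¬a)` (normalized). -/
noncomputable def neg (p : ℤ × A) : ℤ × A := norm (-p.1 - 1, mvnot p.2)

/-- The zero element `(0, 0)`. -/
def zeroEl : ℤ × A := ((0 : ℤ), zero)

/-- The lexicographic order on pairs. -/
def lexLe (p q : ℤ × A) : Prop := p.1 < q.1 ∨ (p.1 = q.1 ∧ mvle p.2 q.2)

end Chang

namespace Chang

variable {A : Type*} [MVAlgebra A]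

/-- Iterated Chang addition: `n • p`. -/
noncomputable def nsmul : ℕ → ℤ × A → ℤ × A
  | 0, _ => zeroEl
  | n + 1, p => add (nsmul n p) p

/-- The strong unit `u = (0,1) = (1,0)` of Chang's group. -/
def unit : ℤ × A := ((1 : ℤ), MVAlgebra.zero)

end Chang

open MVAlgebra Chang in
/-- `u = (0,1) = (1,0)` is a strong unit of Chang's group `A*`. -/
theorem chang_unit_is_strong_unit (A : Type*) [MVAlgebra A]
    (hchain : ∀ a b : A, mvle a b ∨ mvle b a)
    (h01 : (zero : A) ≠ one) :
    ∀ p ∈ S A, ∃ n : ℕ, lexLe p (nsmul n (unit (A := A))) := by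
  have key : ∀ n : ℕ, nsmul n (unit (A := A)) = ((n : ℤ), zero) := by
    intro n
    induction n with
    | zero => rfl
    | succ n ih =>
      rw [nsmul, ih]
      simp only [add, unit]
      refine (if_neg (show ¬ oplus (zero : A) zero = one by rw [zero_oplus]; exact h01)).trans ?_
      simp only [zero_oplus]
      simp
  intro p _
  refine ⟨p.1.toNat + 1, ?_⟩
  rw [key]
  left
  push_cast
  omega
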